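/- Σ_{m=0}^∞ (1/((m+1)(m+2))) · ₀F₁(; m+3; 1) = I₀(2) - 1, where I₀ is the modified Bessel function of the first kind of order 0; and Σ_{m=0}^∞ (1/((m+1)(m+2))) · ₁F₁(1; m+3; 1) = Ei(1) - γ, where Ei is the exponential integral and γ the Euler–Mascheroni constant. -/

import Mathlib

open scoped BigOperators
open Filter Topology

/-- Pochhammer symbol `(a)_k = Γ(a+k)/Γ(a)`. -/
noncomputable def poch (a : ℝ) (k : ℕ) : ℝ := Real.Gamma (a + k) / Real.Gamma a

/-- Modified Bessel function of the first kind of order 0: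
`I₀(x) = Σ_{k=0}^∞ (x/2)^{2k}/(k!)²`. -/
noncomputable def besselI0 (x : ℝ) : ℝ :=
  ∑' k : ℕ, (x / 2) ^ (2 * k) / (Nat.factorial k : ℝ) ^ 2

/-- The exponential integral at 1: `Ei(1) = γ + Σ_{k=1}^∞ 1/(k·k!)`. -/
noncomputable def Ei1 : ℝ :=
  Real.eulerMascheroniConstant +
    ∑' k : ℕ, 1 / (((k : ℝ) + 1) * (Nat.factorial (k + 1) : ℝ))

lemma poch_nat (m k : ℕ) : poch ((m : ℝ) + 3) k =
    ((m + k + 2).factorial : ℝ) / ((m + 2).factorial : ℝ) := by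
  unfold poch
  have h1 : (m : ℝ) + 3 + k = ((m + k + 2 : ℕ) : ℝ) + 1 := by push_cast; ring
  have h2 : (m : ℝ) + 3 = ((m + 2 : ℕ) : ℝ) + 1 := by push_cast; ring
  rw [h1, h2, Real.Gamma_nat_eq_factorial, Real.Gamma_nat_eq_factorial]

lemma poch_one (k : ℕ) : poch 1 k = (k.factorial : ℝ) := by
  unfold poch
  have h1 : (1 : ℝ) + k = (k : ℝ) + 1 := by ring
  rw [h1, Real.Gamma_nat_eq_factorial, Real.Gamma_one, div_one]

lemma tendB (k : ℕ) :
    Tendsto (fun m : ℕ => (m.factorial : ℝ) / ((m + k + 1).factorial)) atTop (𝓝 0) := by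
  have h0 : ∀ m : ℕ, 0 ≤ (m.factorial : ℝ) / ((m + k + 1).factorial) := fun m => by positivity
  have hle : ∀ m : ℕ, (m.factorial : ℝ) / ((m + k + 1).factorial) ≤ 1 / ((m : ℝ) + 1) := by
    intro m
    rw [div_le_div_iff₀ (by positivity) (by positivity)]
    have h : (m + 1).factorial ≤ (m + k + 1).factorial := Nat.factorial_le (by omega)
    calc (m.factorial : ℝ) * ((m : ℝ) + 1) = ((m + 1).factorial : ℝ) := by
          rw [Nat.factorial_succ]; push_cast; ring
      _ ≤ ((m + k + 1).factorial : ℝ) := by exact_mod_cast h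
      _ = 1 * ((m + k + 1).factorial : ℝ) := (one_mul _).symm
  exact squeeze_zero h0 hle tendsto_one_div_add_atTop_nhds_zero_nat

lemma hasB (k : ℕ) :
    HasSum (fun m : ℕ => (m.factorial : ℝ) / ((m + k + 2).factorial))
      (1 / (((k : ℝ) + 1) * ((k + 1).factorial : ℝ))) := by
  set a : ℕ → ℝ := fun m => (1 / ((k : ℝ) + 1)) * ((m.factorial : ℝ) / ((m + k + 1).factorial))
    with ha
  have key : ∀ m : ℕ, (m.factorial : ℝ) / ((m + k + 2).factorial) = a m - a (m + 1) := by
    intro m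
    have h1 : ((m + k + 2).factorial : ℝ) = ((m : ℝ) + k + 2) * ((m + k + 1).factorial : ℝ) := by
      rw [show m + k + 2 = (m + k + 1) + 1 by ring, Nat.factorial_succ]; push_cast; ring
    have h2 : ((m + 1).factorial : ℝ) = ((m : ℝ) + 1) * (m.factorial : ℝ) := by
      rw [Nat.factorial_succ]; push_cast; ring
    have h3 : m + 1 + k + 1 = m + k + 2 := by ring
    simp only [ha, h3]
    rw [h1, h2]
    have hk : ((k : ℝ) + 1) ≠ 0 := by positivity
    have hm2 : ((m : ℝ) + k + 2) ≠ 0 := by positivity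
    have hfac1 : ((m + k + 1).factorial : ℝ) ≠ 0 := by positivity
    field_simp
    ring
  have h0 : ∀ m : ℕ, 0 ≤ (m.factorial : ℝ) / ((m + k + 2).factorial) := fun m => by positivity
  rw [hasSum_iff_tendsto_nat_of_nonneg h0]
  have heq : ∀ n : ℕ, ∑ m ∈ Finset.range n, (m.factorial : ℝ) / ((m + k + 2).factorial)
      = a 0 - a n := by
    intro n
    rw [← Finset.sum_range_sub' a n]
    exact Finset.sum_congr rfl fun m _ => key m
  simp only [heq]
  have ha0 : a 0 = 1 / (((k : ℝ) + 1) * ((k + 1).factorial : ℝ)) := by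
    simp only [ha, Nat.factorial_zero, Nat.cast_one, zero_add]
    rw [one_div_mul_one_div]
  have han : Tendsto a atTop (𝓝 0) := by
    have := (tendB k).const_mul (1 / ((k : ℝ) + 1))
    simpa [ha, mul_zero] using this
  have := tendsto_const_nhds (x := a 0) (f := atTop (α := ℕ)).sub han
  simpa [ha0] using this

lemma hasA (k : ℕ) :
    HasSum (fun m : ℕ => (m.factorial : ℝ) / ((m + k + 2).factorial * k.factorial))
      (1 / (((k + 1).factorial : ℝ)) ^ 2) := by
  have h := (hasB k).div_const (k.factorial : ℝ)
  have heq : (fun m : ℕ => (m.factorial : ℝ) / ((m + k + 2).factorial) / (k.factorial : ℝ))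
      = fun m : ℕ => (m.factorial : ℝ) / ((m + k + 2).factorial * k.factorial) := by
    funext m; rw [div_div]
  rw [heq] at h
  suffices e : (1 / (((k + 1).factorial : ℝ)) ^ 2) = 1 / (((k : ℝ) + 1) * ((k + 1).factorial : ℝ)) / (k.factorial : ℝ) by rw [e]; exact h
  have hf : ((k + 1).factorial : ℝ) = ((k : ℝ) + 1) * (k.factorial : ℝ) := by
    rw [Nat.factorial_succ]; push_cast; ring
  rw [hf]
  have h1 : (k.factorial : ℝ) ≠ 0 := by positivity
  have h2 : ((k : ℝ) + 1) ≠ 0 := by positivity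
  field_simp

lemma summable_geo_bound {s : ℕ → ℝ} (h0 : ∀ k, 0 ≤ s k)
    (hle : ∀ k, s k ≤ (1 / 2 : ℝ) ^ k) : Summable s :=
  Summable.of_nonneg_of_le h0 hle (summable_geometric_of_lt_one (by norm_num) (by norm_num))

lemma two_pow_le_fact (k : ℕ) : (2 : ℝ) ^ k ≤ ((k + 1).factorial : ℝ) := by
  have h : 2 ^ k ≤ (k + 1).factorial := by
    have := @Nat.factorial_mul_pow_le_factorial 1 k
    simpa [Nat.factorial_one, Nat.add_comm 1 k] using this
  exact_mod_cast h

/-- `Σ_{m=0}^∞ ₀F₁(;m+3;1)/((m+1)(m+2)) = I₀(2) - 1` and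
`Σ_{m=0}^∞ ₁F₁(1;m+3;1)/((m+1)(m+2)) = Ei(1) - γ`. -/
theorem hypergeometric_zeta_zero_one :
    (∑' m : ℕ, (1 / (((m : ℝ) + 1) * ((m : ℝ) + 2))) *
        ∑' k : ℕ, 1 / (poch ((m : ℝ) + 3) k * (Nat.factorial k : ℝ))) =
      besselI0 2 - 1 ∧
    (∑' m : ℕ, (1 / (((m : ℝ) + 1) * ((m : ℝ) + 2))) *
        ∑' k : ℕ, poch 1 k / (poch ((m : ℝ) + 3) k * (Nat.factorial k : ℝ))) =
      Ei1 - Real.eulerMascheroniConstant := by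
  -- the double-sum summands
  set F : ℕ → ℕ → ℝ := fun k m => (m.factorial : ℝ) / ((m + k + 2).factorial * k.factorial)
    with hF
  set G : ℕ → ℕ → ℝ := fun k m => (m.factorial : ℝ) / ((m + k + 2).factorial) with hG
  have hF0 : ∀ k m, 0 ≤ F k m := fun k m => by positivity
  have hG0 : ∀ k m, 0 ≤ G k m := fun k m => by positivity
  -- summability of the slices and of the sums of slices
  have htsumF : ∀ k, (∑' m, F k m) = 1 / (((k + 1).factorial : ℝ)) ^ 2 :=
    fun k => (hasA k).tsum_eq
  have htsumG : ∀ k, (∑' m, G k m) = 1 / (((k : ℝ) + 1) * ((k + 1).factorial : ℝ)) :=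
    fun k => (hasB k).tsum_eq
  have hfb : ∀ k : ℕ, (1 : ℝ) / ((k + 1).factorial : ℝ) ≤ (1 / 2 : ℝ) ^ k := by
    intro k
    rw [div_pow, one_pow]
    apply div_le_div_of_nonneg_left (by norm_num) (by positivity)
    exact two_pow_le_fact k
  have hGsum : Summable (fun k => ∑' m, G k m) := by
    apply summable_geo_bound (fun k => by rw [htsumG k]; positivity)
    intro k
    rw [htsumG k]
    calc 1 / (((k : ℝ) + 1) * ((k + 1).factorial : ℝ))
        ≤ 1 / ((k + 1).factorial : ℝ) := by
          apply div_le_div_of_nonneg_left (by norm_num) (by positivity)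
          exact le_mul_of_one_le_left (by positivity) (by linarith [(Nat.cast_nonneg k : (0:ℝ) ≤ k)])
      _ ≤ (1 / 2 : ℝ) ^ k := hfb k
  have hFsum : Summable (fun k => ∑' m, F k m) := by
    apply summable_geo_bound (fun k => by rw [htsumF k]; positivity)
    intro k
    rw [htsumF k]
    calc 1 / (((k + 1).factorial : ℝ)) ^ 2
        ≤ 1 / ((k + 1).factorial : ℝ) := by
          rw [sq]
          apply div_le_div_of_nonneg_left (by norm_num) (by positivity)
          exact le_mul_of_one_le_left (by positivity)
            (Nat.one_le_cast.mpr (Nat.factorial_pos (k + 1)))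
      _ ≤ (1 / 2 : ℝ) ^ k := hfb k
  have hFunc : Summable (Function.uncurry F) := by
    rw [show Function.uncurry F = fun p : ℕ × ℕ => F p.1 p.2 from rfl,
      summable_prod_of_nonneg (fun p => hF0 p.1 p.2)]
    exact ⟨fun k => (hasA k).summable, hFsum⟩
  have hGunc : Summable (Function.uncurry G) := by
    rw [show Function.uncurry G = fun p : ℕ × ℕ => G p.1 p.2 from rfl,
      summable_prod_of_nonneg (fun p => hG0 p.1 p.2)]
    exact ⟨fun k => (hasB k).summable, hGsum⟩
  -- rewrite each outer summand
  have hfacm : ∀ m : ℕ, ((m + 2).factorial : ℝ)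
      = ((m : ℝ) + 2) * ((m : ℝ) + 1) * (m.factorial : ℝ) := by
    intro m
    rw [show m + 2 = (m + 1) + 1 from rfl, Nat.factorial_succ, Nat.factorial_succ]
    push_cast; ring
  have hterm1 : ∀ m : ℕ, (1 / (((m : ℝ) + 1) * ((m : ℝ) + 2))) *
      ∑' k : ℕ, 1 / (poch ((m : ℝ) + 3) k * (Nat.factorial k : ℝ)) = ∑' k, F k m := by
    intro m
    rw [← tsum_mul_left]
    apply tsum_congr
    intro k
    rw [poch_nat m k, hF]
    have h1 : ((m + k + 2).factorial : ℝ) ≠ 0 := by positivity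
    have h2 : (k.factorial : ℝ) ≠ 0 := by positivity
    have h3 : ((m : ℝ) + 1) ≠ 0 := by positivity
    have h4 : ((m : ℝ) + 2) ≠ 0 := by positivity
    rw [hfacm m]
    field_simp
  have hterm2 : ∀ m : ℕ, (1 / (((m : ℝ) + 1) * ((m : ℝ) + 2))) *
      ∑' k : ℕ, poch 1 k / (poch ((m : ℝ) + 3) k * (Nat.factorial k : ℝ)) = ∑' k, G k m := by
    intro m
    rw [← tsum_mul_left]
    apply tsum_congr
    intro k
    rw [poch_nat m k, poch_one k, hG]
    have h1 : ((m + k + 2).factorial : ℝ) ≠ 0 := by positivity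
    have h2 : (k.factorial : ℝ) ≠ 0 := by positivity
    have h3 : ((m : ℝ) + 1) ≠ 0 := by positivity
    have h4 : ((m : ℝ) + 2) ≠ 0 := by positivity
    rw [hfacm m]
    field_simp
  constructor
  · calc (∑' m : ℕ, (1 / (((m : ℝ) + 1) * ((m : ℝ) + 2))) *
        ∑' k : ℕ, 1 / (poch ((m : ℝ) + 3) k * (Nat.factorial k : ℝ)))
        = ∑' m, ∑' k, F k m := tsum_congr hterm1
      _ = ∑' k, ∑' m, F k m := Summable.tsum_comm hFunc
      _ = ∑' k : ℕ, 1 / (((k + 1).factorial : ℝ)) ^ 2 := tsum_congr htsumF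
      _ = besselI0 2 - 1 := by
          have hs : Summable (fun k : ℕ => 1 / ((k.factorial : ℝ)) ^ 2) := by
            rw [← summable_nat_add_iff 1]
            exact hFsum.congr fun k => by rw [htsumF k]
          have h0 : besselI0 2 = ∑' k : ℕ, 1 / ((k.factorial : ℝ)) ^ 2 := by
            unfold besselI0
            apply tsum_congr
            intro k
            norm_num
          rw [h0, Summable.tsum_eq_zero_add hs]
          norm_num
  · calc (∑' m : ℕ, (1 / (((m : ℝ) + 1) * ((m : ℝ) + 2))) *
        ∑' k : ℕ, poch 1 k / (poch ((m : ℝ) + 3) k * (Nat.factorial k : ℝ)))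
        = ∑' m, ∑' k, G k m := tsum_congr hterm2
      _ = ∑' k, ∑' m, G k m := Summable.tsum_comm hGunc
      _ = ∑' k : ℕ, 1 / (((k : ℝ) + 1) * ((k + 1).factorial : ℝ)) := tsum_congr htsumG
      _ = Ei1 - Real.eulerMascheroniConstant := by unfold Ei1; ring
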